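/- Let w : ℝ → (0,∞) be continuous with 1/w not Lebesgue-integrable on (−∞,0) and not Lebesgue-integrable on (0,∞), and define for t ∈ ℝ the operator T_w(t) on L²_w(ℝ) by (T_w(t)x)(ξ) = (w(ξ+μ_w(ξ,t))/w(ξ))·x(ξ+μ_w(ξ,t)). Then the group (T_w(t))_{t∈ℝ} is strongly continuous: for every x ∈ L²_w(ℝ), the map t ↦ T_w(t)x from ℝ to L²_w(ℝ) is continuous; in particular ‖T_w(t)x − x‖_{L²_w(ℝ)} → 0 as t → 0. -/

import Mathlib

open MeasureTheory Filter Set Topology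

open scoped ENNReal NNReal

/-- `p_w(ξ) = ∫₀^ξ w(ζ)⁻¹ dζ`. -/
noncomputable def pW (w : ℝ → ℝ) (ξ : ℝ) : ℝ := ∫ ζ in (0:ℝ)..ξ, (w ζ)⁻¹

/-- `μ_w(ξ,t) = p_w⁻¹(p_w(ξ) + t) − ξ`. -/
noncomputable def muW (w : ℝ → ℝ) (ξ t : ℝ) : ℝ :=
  Function.invFun (pW w) (pW w ξ + t) - ξ

/-- `(T_w(t)x)(ξ) = (w(ξ+μ_w(ξ,t))/w(ξ)) · x(ξ+μ_w(ξ,t))`. -/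
noncomputable def Tw (w : ℝ → ℝ) (t : ℝ) (x : ℝ → ℂ) (ξ : ℝ) : ℂ :=
  ((w (ξ + muW w ξ t) / w ξ : ℝ) : ℂ) * x (ξ + muW w ξ t)

/-- The inverse of `pW`. -/
noncomputable def qW (w : ℝ → ℝ) : ℝ → ℝ := Function.invFun (pW w)

section Aux

variable {w : ℝ → ℝ}

/-- One-dimensional change of variables for lower integrals, deriv version. -/
lemma lintegral_image_eq_lintegral_abs_deriv_mul' {s : Set ℝ} {f : ℝ → ℝ} {f' : ℝ → ℝ}
    (hs : MeasurableSet s) (hf' : ∀ x ∈ s, HasDerivWithinAt f (f' x) s x)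
    (hf : Set.InjOn f s) (g : ℝ → ℝ≥0∞) :
    ∫⁻ x in f '' s, g x = ∫⁻ x in s, ENNReal.ofReal |f' x| * g (f x) := by
  simpa only [ContinuousLinearMap.det_toSpanSingleton] using
    lintegral_image_eq_lintegral_abs_det_fderiv_mul volume hs
      (fun x hx => (hf' x hx).hasFDerivWithinAt) hf g

lemma wInv_cont (hw_cont : Continuous w) (hw_pos : ∀ ξ, 0 < w ξ) :
    Continuous fun ζ => (w ζ)⁻¹ :=
  hw_cont.inv₀ fun ζ => (hw_pos ζ).ne'

lemma wInv_intInt (hw_cont : Continuous w) (hw_pos : ∀ ξ, 0 < w ξ) (a b : ℝ) :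
    IntervalIntegrable (fun ζ => (w ζ)⁻¹) volume a b :=
  (wInv_cont hw_cont hw_pos).intervalIntegrable a b

lemma pW_hasDerivAt (hw_cont : Continuous w) (hw_pos : ∀ ξ, 0 < w ξ) (ξ : ℝ) :
    HasDerivAt (pW w) (w ξ)⁻¹ ξ :=
  intervalIntegral.integral_hasDerivAt_right (wInv_intInt hw_cont hw_pos 0 ξ)
    ((wInv_cont hw_cont hw_pos).stronglyMeasurableAtFilter _ _)
    (wInv_cont hw_cont hw_pos).continuousAt

lemma pW_continuous (hw_cont : Continuous w) (hw_pos : ∀ ξ, 0 < w ξ) :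
    Continuous (pW w) :=
  continuous_iff_continuousAt.2 fun ξ => (pW_hasDerivAt hw_cont hw_pos ξ).continuousAt

lemma pW_strictMono (hw_cont : Continuous w) (hw_pos : ∀ ξ, 0 < w ξ) :
    StrictMono (pW w) := by
  intro a b hab
  have h1 : pW w b - pW w a = ∫ ζ in a..b, (w ζ)⁻¹ :=
    intervalIntegral.integral_interval_sub_left (wInv_intInt hw_cont hw_pos 0 b)
      (wInv_intInt hw_cont hw_pos 0 a)
  have h2 : 0 < ∫ ζ in a..b, (w ζ)⁻¹ :=
    intervalIntegral.intervalIntegral_pos_of_pos (wInv_intInt hw_cont hw_pos a b)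
      (fun ζ => inv_pos.2 (hw_pos ζ)) hab
  linarith

lemma pW_tendsto_atTop (hw_cont : Continuous w) (hw_pos : ∀ ξ, 0 < w ξ)
    (hni_pos : ¬ IntegrableOn (fun ζ => (w ζ)⁻¹) (Set.Ioi 0)) :
    Tendsto (pW w) atTop atTop := by
  refine tendsto_atTop_atTop_of_monotone (pW_strictMono hw_cont hw_pos).monotone ?_
  by_contra h
  push_neg at h
  obtain ⟨M, hM⟩ := h
  refine hni_pos ?_
  refine integrableOn_Ioi_of_intervalIntegral_norm_bounded M 0
    (fun i => (wInv_cont hw_cont hw_pos).integrableOn_Ioc) tendsto_id ?_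
  filter_upwards with i
  have h1 : (∫ ζ in (0:ℝ)..i, ‖(w ζ)⁻¹‖) = pW w i := by
    refine intervalIntegral.integral_congr fun ζ _ => ?_
    exact Real.norm_of_nonneg (inv_nonneg.2 (hw_pos ζ).le)
  simp only [id_eq]
  rw [h1]
  exact (hM i).le

lemma pW_tendsto_atBot (hw_cont : Continuous w) (hw_pos : ∀ ξ, 0 < w ξ)
    (hni_neg : ¬ IntegrableOn (fun ζ => (w ζ)⁻¹) (Set.Iio 0)) :
    Tendsto (pW w) atBot atBot := by
  refine tendsto_atBot_atBot_of_monotone (pW_strictMono hw_cont hw_pos).monotone ?_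
  by_contra h
  push_neg at h
  obtain ⟨M, hM⟩ := h
  refine hni_neg ?_
  have hIic : IntegrableOn (fun ζ => (w ζ)⁻¹) (Set.Iic 0) volume := by
    refine integrableOn_Iic_of_intervalIntegral_norm_bounded (-M) 0
      (fun i => (wInv_cont hw_cont hw_pos).integrableOn_Ioc) tendsto_id ?_
    filter_upwards with i
    have h1 : (∫ ζ in i..(0:ℝ), ‖(w ζ)⁻¹‖) = ∫ ζ in i..(0:ℝ), (w ζ)⁻¹ := by
      refine intervalIntegral.integral_congr fun ζ _ => ?_
      exact Real.norm_of_nonneg (inv_nonneg.2 (hw_pos ζ).le)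
    have h2 : (∫ ζ in i..(0:ℝ), (w ζ)⁻¹) = - pW w i := by
      have h3 : pW w 0 - pW w i = ∫ ζ in i..(0:ℝ), (w ζ)⁻¹ :=
        intervalIntegral.integral_interval_sub_left (wInv_intInt hw_cont hw_pos 0 0)
          (wInv_intInt hw_cont hw_pos 0 i)
      have h4 : pW w 0 = 0 := intervalIntegral.integral_same
      linarith
    simp only [id_eq]
    rw [h1, h2]
    linarith [hM i]
  exact hIic.mono_set Set.Iio_subset_Iic_self

lemma pW_surjective (hw_cont : Continuous w) (hw_pos : ∀ ξ, 0 < w ξ)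
    (hni_neg : ¬ IntegrableOn (fun ζ => (w ζ)⁻¹) (Set.Iio 0))
    (hni_pos : ¬ IntegrableOn (fun ζ => (w ζ)⁻¹) (Set.Ioi 0)) :
    Function.Surjective (pW w) :=
  (pW_continuous hw_cont hw_pos).surjective (pW_tendsto_atTop hw_cont hw_pos hni_pos)
    (pW_tendsto_atBot hw_cont hw_pos hni_neg)

end Aux

section Main

variable {w : ℝ → ℝ} (hw_cont : Continuous w) (hw_pos : ∀ ξ, 0 < w ξ)
variable (hni_neg : ¬ IntegrableOn (fun ζ => (w ζ)⁻¹) (Set.Iio 0))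
variable (hni_pos : ¬ IntegrableOn (fun ζ => (w ζ)⁻¹) (Set.Ioi 0))

include hw_cont hw_pos in
lemma qW_pW (ξ : ℝ) : qW w (pW w ξ) = ξ :=
  Function.leftInverse_invFun (pW_strictMono hw_cont hw_pos).injective ξ

include hw_cont hw_pos hni_neg hni_pos in
lemma pW_qW (η : ℝ) : pW w (qW w η) = η :=
  Function.rightInverse_invFun (pW_surjective hw_cont hw_pos hni_neg hni_pos) η

include hw_cont hw_pos hni_neg hni_pos in
lemma qW_surjective : Function.Surjective (qW w) :=
  fun ξ => ⟨pW w ξ, qW_pW hw_cont hw_pos ξ⟩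

include hw_cont hw_pos hni_neg hni_pos in
lemma qW_injective : Function.Injective (qW w) := fun a b hab => by
  rw [← pW_qW hw_cont hw_pos hni_neg hni_pos a, ← pW_qW hw_cont hw_pos hni_neg hni_pos b, hab]

include hw_cont hw_pos hni_neg hni_pos in
lemma qW_continuous : Continuous (qW w) := by
  have hmono := pW_strictMono hw_cont hw_pos
  have hsurj := pW_surjective hw_cont hw_pos hni_neg hni_pos
  have h1 : qW w = ⇑(StrictMono.orderIsoOfSurjective (pW w) hmono hsurj).symm := by
    funext η
    apply hmono.injective
    rw [pW_qW hw_cont hw_pos hni_neg hni_pos,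
      StrictMono.orderIsoOfSurjective_self_symm_apply (pW w) hmono hsurj η]
  rw [h1]
  exact (StrictMono.orderIsoOfSurjective (pW w) hmono hsurj).toHomeomorph.symm.continuous

include hw_cont hw_pos hni_neg hni_pos in
lemma qW_hasDerivAt (η : ℝ) : HasDerivAt (qW w) (w (qW w η)) η := by
  have h := HasDerivAt.of_local_left_inverse
    (qW_continuous hw_cont hw_pos hni_neg hni_pos).continuousAt
    (pW_hasDerivAt hw_cont hw_pos (qW w η)) (inv_ne_zero (hw_pos (qW w η)).ne')
    (Filter.Eventually.of_forall (pW_qW hw_cont hw_pos hni_neg hni_pos))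
  simpa using h

include hw_cont hw_pos hni_neg hni_pos in
/-- Change of variables: `∫⁻ F = ∫⁻ η, w(q η) • F(q η)`. -/
lemma lintegral_qW (F : ℝ → ℝ≥0∞) :
    ∫⁻ ξ, F ξ = ∫⁻ η, ENNReal.ofReal (w (qW w η)) * F (qW w η) := by
  have h := lintegral_image_eq_lintegral_abs_deriv_mul' MeasurableSet.univ
    (fun η _ => (qW_hasDerivAt hw_cont hw_pos hni_neg hni_pos η).hasDerivWithinAt)
    (qW_injective hw_cont hw_pos hni_neg hni_pos).injOn F
  rw [Set.image_univ, (qW_surjective hw_cont hw_pos hni_neg hni_pos).range_eq,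
    Measure.restrict_univ] at h
  rw [h, ← Measure.restrict_univ (μ := volume)]
  exact lintegral_congr fun η => by rw [abs_of_pos (hw_pos _)]

include hw_cont hw_pos hni_neg hni_pos in
lemma qW_qmp : Measure.QuasiMeasurePreserving (qW w) volume volume := by
  refine ⟨(qW_continuous hw_cont hw_pos hni_neg hni_pos).measurable, ?_⟩
  refine Measure.AbsolutelyContinuous.mk fun s hs h0 => ?_
  rw [Measure.map_apply (qW_continuous hw_cont hw_pos hni_neg hni_pos).measurable hs]
  have himg : qW w ⁻¹' s = pW w '' s := by
    ext ξ
    constructor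
    · intro hξ
      exact ⟨qW w ξ, hξ, pW_qW hw_cont hw_pos hni_neg hni_pos ξ⟩
    · rintro ⟨a, ha, rfl⟩
      simpa [Set.mem_preimage, qW_pW hw_cont hw_pos a] using ha
  rw [himg]
  have h1 := lintegral_image_eq_lintegral_abs_deriv_mul' hs
    (fun ξ _ => (pW_hasDerivAt hw_cont hw_pos ξ).hasDerivWithinAt)
    (pW_strictMono hw_cont hw_pos).injective.injOn (fun _ => 1)
  rw [← setLIntegral_one, h1, setLIntegral_measure_zero s _ h0]

include hw_cont hw_pos hni_neg hni_pos in
lemma pW_qmp : Measure.QuasiMeasurePreserving (pW w) volume volume := by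
  refine ⟨(pW_continuous hw_cont hw_pos).measurable, ?_⟩
  refine Measure.AbsolutelyContinuous.mk fun s hs h0 => ?_
  rw [Measure.map_apply (pW_continuous hw_cont hw_pos).measurable hs]
  have himg : pW w ⁻¹' s = qW w '' s := by
    ext ξ
    constructor
    · intro hξ
      exact ⟨pW w ξ, hξ, qW_pW hw_cont hw_pos ξ⟩
    · rintro ⟨a, ha, rfl⟩
      simpa [Set.mem_preimage, pW_qW hw_cont hw_pos hni_neg hni_pos a] using ha
  rw [himg]
  have h1 := lintegral_image_eq_lintegral_abs_deriv_mul' hs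
    (fun η _ => (qW_hasDerivAt hw_cont hw_pos hni_neg hni_pos η).hasDerivWithinAt)
    (qW_injective hw_cont hw_pos hni_neg hni_pos).injOn (fun _ => 1)
  rw [← setLIntegral_one, h1, setLIntegral_measure_zero s _ h0]

include hw_cont hw_pos hni_neg hni_pos in
lemma phi_qmp (t : ℝ) :
    Measure.QuasiMeasurePreserving (fun ξ => qW w (pW w ξ + t)) volume volume := by
  have h := (qW_qmp hw_cont hw_pos hni_neg hni_pos).comp
    (((measurePreserving_add_right volume t).quasiMeasurePreserving).comp
      (pW_qmp hw_cont hw_pos hni_neg hni_pos))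
  exact h

/-- Rewriting `Tw` through `qW`. -/
lemma Tw_eq (t : ℝ) (x : ℝ → ℂ) (ξ : ℝ) :
    Tw w t x ξ = ((w (qW w (pW w ξ + t)) / w ξ : ℝ) : ℂ) * x (qW w (pW w ξ + t)) := by
  have hmu : ξ + muW w ξ t = qW w (pW w ξ + t) := by
    rw [muW, qW]; ring
  rw [Tw, hmu]

end Main

theorem stmt_12 (w : ℝ → ℝ) (hw_cont : Continuous w) (hw_pos : ∀ ξ, 0 < w ξ)
    (hni_neg : ¬ IntegrableOn (fun ζ => (w ζ)⁻¹) (Set.Iio 0))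
    (hni_pos : ¬ IntegrableOn (fun ζ => (w ζ)⁻¹) (Set.Ioi 0)) :
    ∀ x : ℝ → ℂ, AEStronglyMeasurable x volume →
      Integrable (fun ξ => w ξ * ‖x ξ‖ ^ 2) →
      (∀ t₀ : ℝ, Tendsto (fun t => ∫ ξ, w ξ * ‖Tw w t x ξ - Tw w t₀ x ξ‖ ^ 2)
        (𝓝 t₀) (𝓝 0)) ∧
      Tendsto (fun t => ∫ ξ, w ξ * ‖Tw w t x ξ - x ξ‖ ^ 2) (𝓝 0) (𝓝 0) := by
  intro x hx_meas hx2
  have hw_ne : ∀ ξ, w ξ ≠ 0 := fun ξ => (hw_pos ξ).ne'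
  have hpq : ∀ η, pW w (qW w η) = η := pW_qW hw_cont hw_pos hni_neg hni_pos
  have hqp : ∀ ξ, qW w (pW w ξ) = ξ := qW_pW hw_cont hw_pos
  have hq_cont : Continuous (qW w) := qW_continuous hw_cont hw_pos hni_neg hni_pos
  have hp_cont : Continuous (pW w) := pW_continuous hw_cont hw_pos
  have hCoV : ∀ F : ℝ → ℝ≥0∞,
      ∫⁻ ξ, F ξ = ∫⁻ η, ENNReal.ofReal (w (qW w η)) * F (qW w η) :=
    lintegral_qW hw_cont hw_pos hni_neg hni_pos
  -- the conjugated function g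
  set g : ℝ → ℂ := fun η => ((w (qW w η) : ℝ) : ℂ) * x (qW w η) with hg_def
  have hg_meas : AEStronglyMeasurable g volume := by
    refine AEStronglyMeasurable.mul ?_ ?_
    · exact (Complex.continuous_ofReal.comp (hw_cont.comp hq_cont)).aestronglyMeasurable
    · exact hx_meas.comp_quasiMeasurePreserving (qW_qmp hw_cont hw_pos hni_neg hni_pos)
  -- key pointwise identity
  have hkey : ∀ (t η : ℝ), ((w (qW w η) : ℝ) : ℂ) * Tw w t x (qW w η) = g (η + t) := by
    intro t η
    have hw0 : ((w (qW w η) : ℝ) : ℂ) ≠ 0 := by exact_mod_cast hw_ne (qW w η)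
    rw [Tw_eq, hpq]
    simp only [hg_def]
    push_cast
    field_simp
  -- the ℝ≥0∞-valued square norm identity
  have hsq : ∀ z : ℂ, ((‖z‖₊ : ℝ≥0∞) : ℝ≥0∞) ^ (2:ℝ) = ENNReal.ofReal (‖z‖ ^ 2) := by
    intro z
    rw [← enorm_eq_nnnorm, ← ofReal_norm, ENNReal.ofReal_rpow_of_nonneg (norm_nonneg z) (by norm_num),
      show (2:ℝ) = ((2:ℕ):ℝ) by norm_num, Real.rpow_natCast]
  have hlin : ∀ t t₀ : ℝ,
      (∫⁻ ξ, ENNReal.ofReal (w ξ * ‖Tw w t x ξ - Tw w t₀ x ξ‖ ^ 2))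
        = ∫⁻ η, (‖g (η + t) - g (η + t₀)‖₊ : ℝ≥0∞) ^ (2:ℝ) := by
    intro t t₀
    rw [hCoV fun ξ => ENNReal.ofReal (w ξ * ‖Tw w t x ξ - Tw w t₀ x ξ‖ ^ 2)]
    refine lintegral_congr fun η => ?_
    have hD : ((w (qW w η) : ℝ) : ℂ) * (Tw w t x (qW w η) - Tw w t₀ x (qW w η))
        = g (η + t) - g (η + t₀) := by
      rw [mul_sub, hkey, hkey]
    have hnorm : ‖g (η + t) - g (η + t₀)‖
        = w (qW w η) * ‖Tw w t x (qW w η) - Tw w t₀ x (qW w η)‖ := by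
      rw [← hD, norm_mul, Complex.norm_real, Real.norm_of_nonneg (hw_pos _).le]
    rw [hsq, hnorm, ← ENNReal.ofReal_mul (hw_pos _).le]
    congr 1
    ring
  -- finiteness
  have hfin : ∫⁻ ξ, ENNReal.ofReal (w ξ * ‖x ξ‖ ^ 2) < ⊤ := by
    refine lt_of_le_of_lt (lintegral_mono fun ξ => ?_) hx2.hasFiniteIntegral
    rw [← ofReal_norm]
    exact ENNReal.ofReal_le_ofReal (le_abs_self _)
  have hg2 : MemLp g 2 volume := by
    refine ⟨hg_meas, ?_⟩
    rw [eLpNorm_eq_lintegral_rpow_enorm_toReal (by norm_num) (by norm_num)]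
    have h2 : ∫⁻ η, (‖g η‖₊ : ℝ≥0∞) ^ (2:ℝ) < ⊤ := by
      have hrw : ∀ η, (‖g η‖₊ : ℝ≥0∞) ^ (2:ℝ)
          = ENNReal.ofReal (w (qW w η)) * ENNReal.ofReal (w (qW w η) * ‖x (qW w η)‖ ^ 2) := by
        intro η
        rw [hsq, ← ENNReal.ofReal_mul (hw_pos _).le]
        congr 1
        have : ‖g η‖ = w (qW w η) * ‖x (qW w η)‖ := by
          rw [hg_def, norm_mul, Complex.norm_real, Real.norm_of_nonneg (hw_pos _).le]
        rw [this]
        ring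
      rw [lintegral_congr hrw, ← hCoV fun ξ => ENNReal.ofReal (w ξ * ‖x ξ‖ ^ 2)]
      exact hfin
    have h3 : ((2:ℝ≥0∞).toReal) = (2:ℝ) := by norm_num
    rw [h3]
    exact ENNReal.rpow_lt_top_of_nonneg (by norm_num) h2.ne
  -- the translation group on L²
  set G : Lp ℂ 2 (volume : Measure ℝ) := hg2.toLp g with hG_def
  set τ : ℝ → C(ℝ, ℝ) := fun t => ⟨fun η => η + t, continuous_id.add continuous_const⟩
    with hτ_def
  have hτ_cont : Continuous τ := by
    refine ContinuousMap.continuous_of_continuous_uncurry _ ?_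
    exact continuous_snd.add continuous_fst
  have hmp : ∀ t : ℝ, MeasurePreserving (τ t) volume volume := fun t =>
    measurePreserving_add_right volume t
  set T : ℝ → Lp ℂ 2 (volume : Measure ℝ) :=
    fun t => Lp.compMeasurePreserving (τ t) (hmp t) G with hT_def
  have hT_cont : Continuous T :=
    Continuous.compMeasurePreservingLp continuous_const hτ_cont hmp (by norm_num)
  have hTcoe : ∀ t : ℝ, (T t : ℝ → ℂ) =ᵐ[volume] fun η => g (η + t) := by
    intro t
    have h1 := Lp.coeFn_compMeasurePreserving G (hmp t)
    have h2 : (⇑G ∘ τ t : ℝ → ℂ) =ᵐ[volume] (g ∘ τ t) :=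
      (hmp t).quasiMeasurePreserving.ae_eq (MemLp.coeFn_toLp hg2)
    exact h1.trans h2
  have hnormeq : ∀ t t₀ : ℝ,
      (∫⁻ η, (‖g (η + t) - g (η + t₀)‖₊ : ℝ≥0∞) ^ (2:ℝ)).toReal = ‖T t - T t₀‖ ^ 2 := by
    intro t t₀
    have hae : (⇑(T t - T t₀) : ℝ → ℂ) =ᵐ[volume] fun η => g (η + t) - g (η + t₀) := by
      filter_upwards [Lp.coeFn_sub (T t) (T t₀), hTcoe t, hTcoe t₀] with η h1 h2 h3
      rw [h1, Pi.sub_apply, h2, h3]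
    have h1 : ‖T t - T t₀‖
        = (eLpNorm (fun η => g (η + t) - g (η + t₀)) 2 volume).toReal := by
      rw [Lp.norm_def, eLpNorm_congr_ae hae]
    rw [h1, eLpNorm_eq_lintegral_rpow_enorm_toReal (by norm_num) (by norm_num)]
    simp only [enorm_eq_nnnorm]
    have h3 : ((2:ℝ≥0∞).toReal) = (2:ℝ) := by norm_num
    rw [h3]
    set A := ∫⁻ η, (‖g (η + t) - g (η + t₀)‖₊ : ℝ≥0∞) ^ (2:ℝ) with hA
    rw [← ENNReal.toReal_rpow]
    rw [← Real.rpow_natCast (A.toReal ^ (1/(2:ℝ))) 2, ← Real.rpow_mul ENNReal.toReal_nonneg]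
    norm_num
  -- measurability of the integrands
  have hTwm : ∀ t : ℝ, AEStronglyMeasurable (Tw w t x) volume := by
    intro t
    have h1 : AEStronglyMeasurable (fun ξ => x (qW w (pW w ξ + t))) volume :=
      hx_meas.comp_quasiMeasurePreserving (phi_qmp hw_cont hw_pos hni_neg hni_pos t)
    have h2 : Continuous fun ξ => ((w (qW w (pW w ξ + t)) / w ξ : ℝ) : ℂ) := by
      refine Complex.continuous_ofReal.comp ?_
      exact (hw_cont.comp (hq_cont.comp (hp_cont.add continuous_const))).div hw_cont
        fun ξ => hw_ne ξ
    refine (h2.aestronglyMeasurable.mul h1).congr ?_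
    exact Filter.Eventually.of_forall fun ξ => (Tw_eq t x ξ).symm
  -- part A
  have partA : ∀ t₀ : ℝ, Tendsto (fun t => ∫ ξ, w ξ * ‖Tw w t x ξ - Tw w t₀ x ξ‖ ^ 2)
      (𝓝 t₀) (𝓝 0) := by
    intro t₀
    have heq : ∀ t : ℝ, ∫ ξ, w ξ * ‖Tw w t x ξ - Tw w t₀ x ξ‖ ^ 2 = ‖T t - T t₀‖ ^ 2 := by
      intro t
      have hmeas_t : AEStronglyMeasurable
          (fun ξ => w ξ * ‖Tw w t x ξ - Tw w t₀ x ξ‖ ^ 2) volume := by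
        exact hw_cont.aestronglyMeasurable.mul ((((hTwm t).sub (hTwm t₀)).norm).pow 2)
      rw [integral_eq_lintegral_of_nonneg_ae
        (Filter.Eventually.of_forall fun ξ => mul_nonneg (hw_pos ξ).le (sq_nonneg _)) hmeas_t,
        hlin t t₀, hnormeq t t₀]
    have h0 : Tendsto (fun t => ‖T t - T t₀‖ ^ 2) (𝓝 t₀) (𝓝 0) := by
      have h1 := (((hT_cont.tendsto t₀).sub (tendsto_const_nhds (x := T t₀))).norm).pow 2
      simpa using h1
    exact h0.congr fun t => (heq t).symm
  refine ⟨partA, ?_⟩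
  have hTw0 : Tw w 0 x = x := by
    funext ξ
    have hmu0 : ξ + muW w ξ 0 = ξ := by
      rw [muW]
      have : Function.invFun (pW w) (pW w ξ + 0) = ξ := by
        rw [add_zero]; exact hqp ξ
      rw [this]; ring
    rw [Tw, hmu0, div_self (hw_ne ξ)]
    simp
  have hfinal := partA 0
  rw [hTw0] at hfinal
  exact hfinal
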